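/- (Symmetry set overlap implies large energy) Let G act on X, A ⊆ G and Y ⊆ X finite nonempty, 0 ≤ α ≤ 1. Then α² · |A ∩ Sym_α(Y)|² · |Y| ≤ E(A,Y). -/

import Mathlib

open scoped Classical

theorem stmt17 {G X : Type*} [Group G] [MulAction G X]
    (A : Finset G) (Y : Finset X) (hY : Y.Nonempty)
    (α : ℝ) (hα0 : 0 ≤ α) (hα1 : α ≤ 1) :
    α ^ 2 *
        ((A.filter (fun g => α * Y.card ≤
          ((Y ∩ Y.image (fun y => g • y)).card : ℝ))).card : ℝ) ^ 2 * Y.card ≤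
      ((((A ×ˢ A) ×ˢ (Y ×ˢ Y)).filter
          (fun q => q.1.1 • q.2.1 = q.1.2 • q.2.2)).card : ℝ) := by
  set S := A.filter (fun g => α * Y.card ≤
      ((Y ∩ Y.image (fun y => g • y)).card : ℝ)) with hSdef
  set f : G × X → X := fun p => p.1 • p.2 with hf
  set r : X → ℕ := fun x => ((A ×ˢ Y).filter (fun p => f p = x)).card with hr
  set rS : X → ℕ := fun x => ((S ×ˢ Y).filter (fun p => f p = x)).card with hrS
  -- Step 1: the energy equals a sum of squared fibre counts
  have h1 : (((A ×ˢ A) ×ˢ (Y ×ˢ Y)).filter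
        (fun q => q.1.1 • q.2.1 = q.1.2 • q.2.2)).card
      = ∑ p ∈ A ×ˢ Y, r (f p) := by
    simp only [hr, hf, Finset.card_filter, Finset.sum_product]
    refine Finset.sum_congr rfl fun a₁ _ => ?_
    rw [Finset.sum_comm]
    refine Finset.sum_congr rfl fun y₁ _ => Finset.sum_congr rfl fun a₂ _ =>
      Finset.sum_congr rfl fun y₂ _ => ?_
    simp [eq_comm]
  have h2 : ∑ p ∈ A ×ˢ Y, r (f p) = ∑ x ∈ (A ×ˢ Y).image f, r x ^ 2 := by
    rw [Finset.sum_comp]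
    refine Finset.sum_congr rfl fun x _ => ?_
    simp [hr, sq, smul_eq_mul]
  -- Step 2: restrict the sum to Y
  have h3 : ∑ x ∈ Y, r x ^ 2 ≤ ∑ x ∈ (A ×ˢ Y).image f, r x ^ 2 := by
    have hz : ∀ x, x ∉ (A ×ˢ Y).image f → r x = 0 := by
      intro x hx
      rw [hr]
      simp only [Finset.card_eq_zero, Finset.filter_eq_empty_iff]
      intro p hp hpx
      exact hx (Finset.mem_image.mpr ⟨p, hp, hpx⟩)
    calc ∑ x ∈ Y, r x ^ 2 ≤ ∑ x ∈ Y ∪ (A ×ˢ Y).image f, r x ^ 2 :=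
          Finset.sum_le_sum_of_subset Finset.subset_union_left
      _ = ∑ x ∈ (A ×ˢ Y).image f, r x ^ 2 := by
          refine (Finset.sum_subset Finset.subset_union_right fun x _ hx => ?_).symm
          rw [hz x hx]; ring
  -- Step 3: rS pointwise below r
  have hrs_le : ∀ x, rS x ≤ r x := by
    intro x
    refine Finset.card_le_card (Finset.filter_subset_filter _ ?_)
    exact Finset.product_subset_product (Finset.filter_subset _ _) le_rfl
  -- Step 4: ∑_{x∈Y} rS x counts pairs in S × Y landing in Y
  have h4 : ∑ x ∈ Y, rS x = ((S ×ˢ Y).filter (fun p => f p ∈ Y)).card := by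
    rw [Finset.card_eq_sum_card_fiberwise
      (s := (S ×ˢ Y).filter (fun p => f p ∈ Y)) (f := f) (t := Y) (fun p hp => (Finset.mem_filter.mp hp).2)]
    refine Finset.sum_congr rfl fun x hx => ?_
    rw [hrS, Finset.filter_filter]
    refine congrArg Finset.card ?_
    ext p
    simp only [Finset.mem_filter]
    constructor
    · rintro ⟨hp, h⟩; exact ⟨hp, h ▸ hx, h⟩
    · rintro ⟨hp, -, h⟩; exact ⟨hp, h⟩
  have h5 : ((S ×ˢ Y).filter (fun p => f p ∈ Y)).card
      = ∑ a ∈ S, (Y ∩ Y.image (fun y => a • y)).card := by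
    simp only [Finset.card_filter, Finset.sum_product]
    refine Finset.sum_congr rfl fun a _ => ?_
    rw [← Finset.card_filter]
    refine Finset.card_nbij (fun y => a • y) ?_ ?_ ?_
    · intro y hy
      rcases Finset.mem_filter.mp hy with ⟨hyY, hayY⟩
      exact Finset.mem_inter.mpr ⟨hayY, Finset.mem_image.mpr ⟨y, hyY, rfl⟩⟩
    · intro y₁ _ y₂ _ h
      exact MulAction.injective a h
    · intro x hx
      rcases Finset.mem_inter.mp hx with ⟨hxY, hxim⟩
      rcases Finset.mem_image.mp hxim with ⟨y, hyY, hyx⟩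
      exact ⟨y, by simp [Finset.mem_filter, hyY, hf, hyx ▸ hxY], hyx⟩
  -- Step 5: lower bound on ∑_{x∈Y} rS x
  have h6 : α * S.card * Y.card ≤ (∑ x ∈ Y, rS x : ℝ) := by
    have hcast : (∑ x ∈ Y, (rS x : ℝ))
        = ∑ a ∈ S, ((Y ∩ Y.image (fun y => a • y)).card : ℝ) := by
      rw [← Nat.cast_sum, h4, h5, Nat.cast_sum]
    rw [hcast]
    calc α * S.card * Y.card = ∑ _a ∈ S, α * Y.card := by
          rw [Finset.sum_const, nsmul_eq_mul]; ring
      _ ≤ ∑ a ∈ S, ((Y ∩ Y.image (fun y => a • y)).card : ℝ) := by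
          refine Finset.sum_le_sum fun a ha => ?_
          exact (Finset.mem_filter.mp ha).2
  -- Step 6: Cauchy-Schwarz and conclusion
  have hCS : (∑ x ∈ Y, (rS x : ℝ)) ^ 2 ≤ Y.card * ∑ x ∈ Y, (rS x : ℝ) ^ 2 :=
    sq_sum_le_card_mul_sum_sq
  have hYpos : (0 : ℝ) < Y.card := by exact_mod_cast Finset.card_pos.mpr hY
  have hS0 : (0:ℝ) ≤ α * S.card * Y.card := by positivity
  have key : α ^ 2 * (S.card : ℝ) ^ 2 * Y.card * Y.card
      ≤ ((((A ×ˢ A) ×ˢ (Y ×ˢ Y)).filter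
          (fun q => q.1.1 • q.2.1 = q.1.2 • q.2.2)).card : ℝ) * Y.card := by
    have e1 : α ^ 2 * (S.card : ℝ) ^ 2 * Y.card * Y.card
        = (α * S.card * Y.card) ^ 2 := by ring
    rw [e1]
    calc (α * S.card * Y.card) ^ 2 ≤ (∑ x ∈ Y, (rS x : ℝ)) ^ 2 := by
          have h6' := h6
          have : (0:ℝ) ≤ ∑ x ∈ Y, (rS x : ℝ) :=
            Finset.sum_nonneg fun _ _ => by positivity
          nlinarith
      _ ≤ Y.card * ∑ x ∈ Y, (rS x : ℝ) ^ 2 := hCS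
      _ ≤ Y.card * ∑ x ∈ Y, (r x : ℝ) ^ 2 := by
          refine mul_le_mul_of_nonneg_left (Finset.sum_le_sum fun x _ => ?_) hYpos.le
          exact pow_le_pow_left₀ (Nat.cast_nonneg _)
            (by exact_mod_cast hrs_le x) 2
      _ ≤ Y.card * ((((A ×ˢ A) ×ˢ (Y ×ˢ Y)).filter
            (fun q => q.1.1 • q.2.1 = q.1.2 • q.2.2)).card : ℝ) := by
          refine mul_le_mul_of_nonneg_left ?_ hYpos.le
          rw [h1, h2]
          exact_mod_cast h3
      _ = _ := by ring
  exact le_of_mul_le_mul_right key hYpos
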